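/- arXiv:2304.00826 — 2 statements merged into one kernel-verified Lean document; each statement's English description precedes it below -/
import Mathlib

section
/- Let σ ≥ 2 and let U₁, U₂ : ℝ → ℝ be two traveling fronts with speed σ for the F/KPP reaction term f(u) = u(1-u), i.e., twice continuously differentiable nonnegative functions satisfying Uᵢ'' + σ Uᵢ' + Uᵢ(1 - Uᵢ) = 0 with Uᵢ(-∞) = 1 and Uᵢ(+∞) = 0. Then each Uᵢ is strictly decreasing, and there exists h ∈ ℝ such that U₂(x) = U₁(x + h) for all x ∈ ℝ. In particular there is a unique such front normalized by U(0) = 1/2. -/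
open Filter Topology

/-- A traveling front with speed `σ` for the F/KPP reaction term `f u = u * (1 - u)`:
a twice continuously differentiable nonnegative function solving
`U'' + σ U' + U (1 - U) = 0` with `U (-∞) = 1` and `U (+∞) = 0`. -/
def IsKPPFront (σ : ℝ) (U : ℝ → ℝ) : Prop :=
  ContDiff ℝ 2 U ∧
  (∀ x : ℝ, 0 ≤ U x) ∧
  (∀ x : ℝ, deriv (deriv U) x + σ * deriv U x + U x * (1 - U x) = 0) ∧
  Tendsto U atBot (𝓝 1) ∧
  Tendsto U atTop (𝓝 0)

variable {σ : ℝ} {U : ℝ → ℝ}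

lemma Front.d1 (hU : IsKPPFront σ U) : Differentiable ℝ U :=
  hU.1.differentiable (by norm_num)

lemma Front.cd1 (hU : IsKPPFront σ U) : ContDiff ℝ 1 (deriv U) := by
  have h := hU.1
  rw [show (2 : WithTop ℕ∞) = 1 + 1 from rfl, contDiff_succ_iff_deriv] at h
  exact h.2.2

lemma Front.d2 (hU : IsKPPFront σ U) : Differentiable ℝ (deriv U) :=
  (Front.cd1 hU).differentiable one_ne_zero

lemma Front.c2 (hU : IsKPPFront σ U) : Continuous (deriv (deriv U)) := by
  have h := Front.cd1 hU
  rw [contDiff_one_iff_deriv] at h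
  exact h.2

lemma Front.ode (hU : IsKPPFront σ U) (x : ℝ) :
    deriv (deriv U) x = -(σ * deriv U x) - U x * (1 - U x) := by
  have := hU.2.2.1 x; linarith

lemma Front.le_one (hU : IsKPPFront σ U) (x : ℝ) : U x ≤ 1 := by
  by_contra hx
  push_neg at hx
  set M : ℝ := (1 + U x) / 2 with hM
  have hM1 : 1 < M := by simp only [hM]; linarith
  have hMU : M < U x := by simp only [hM]; linarith
  -- eventual bounds
  have hbot : ∀ᶠ y in atBot, U y < M := hU.2.2.2.1 (Iio_mem_nhds hM1)
  have htop : ∀ᶠ y in atTop, U y < M := hU.2.2.2.2 (Iio_mem_nhds (by linarith))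
  obtain ⟨c, hc⟩ := eventually_atBot.1 hbot
  obtain ⟨d, hd⟩ := eventually_atTop.1 htop
  set a : ℝ := min c x
  set b : ℝ := max d x
  have hab : a ≤ b := le_trans (min_le_right c x) (le_max_right d x)
  obtain ⟨x₁, hx₁m, hx₁⟩ := (isCompact_Icc (a := a) (b := b)).exists_isMaxOn
    ⟨x, ⟨min_le_right c x, le_max_right d x⟩⟩ (Front.d1 hU).continuous.continuousOn
  have hUx₁ : U x ≤ U x₁ := hx₁ ⟨min_le_right c x, le_max_right d x⟩
  have hglob : ∀ y, U y ≤ U x₁ := by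
    intro y
    rcases le_or_gt y a with h | h
    · exact le_trans (hc y (le_trans h (min_le_left c x))).le (by linarith)
    rcases le_or_gt y b with h' | h'
    · exact hx₁ ⟨h.le, h'⟩
    · exact le_trans (hd y (le_trans (le_max_left d x) h'.le)).le (by linarith)
  have hloc : IsLocalMax U x₁ := Filter.Eventually.of_forall hglob
  have hder : deriv U x₁ = 0 := hloc.deriv_eq_zero
  have hpp : 0 < deriv (deriv U) x₁ := by
    rw [Front.ode hU, hder]
    have h1 : 1 < U x₁ := by linarith
    nlinarith
  -- second derivative positive near x₁
  have hev : ∀ᶠ y in 𝓝 x₁, 0 < deriv (deriv U) y :=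
    (Front.c2 hU).continuousAt (Ioi_mem_nhds hpp)
  obtain ⟨δ, hδpos, hδ⟩ := Metric.eventually_nhds_iff.1 hev
  set t : ℝ := x₁ + δ / 2 with ht
  have hx₁t : x₁ < t := by simp [ht]; linarith
  have hsub : ∀ y ∈ Set.Icc x₁ t, dist y x₁ < δ := by
    intro y hy
    rw [Real.dist_eq, abs_lt]
    constructor
    · linarith [hy.1]
    · have h2 := hy.2
      rw [ht] at h2
      linarith
  have hmono1 : StrictMonoOn (deriv U) (Set.Icc x₁ t) := by
    apply strictMonoOn_of_deriv_pos (convex_Icc _ _)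
      ((Front.d2 hU).continuous.continuousOn)
    intro y hy
    rw [interior_Icc] at hy
    exact hδ (hsub y ⟨hy.1.le, hy.2.le⟩)
  have hmono2 : StrictMonoOn U (Set.Icc x₁ t) := by
    apply strictMonoOn_of_deriv_pos (convex_Icc _ _)
      ((Front.d1 hU).continuous.continuousOn)
    intro y hy
    rw [interior_Icc] at hy
    have := hmono1 (Set.left_mem_Icc.2 hx₁t.le) ⟨hy.1.le, hy.2.le⟩ hy.1
    rw [hder] at this
    exact this
  have : U x₁ < U t := hmono2 (Set.left_mem_Icc.2 hx₁t.le) (Set.right_mem_Icc.2 hx₁t.le) hx₁t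
  exact absurd (hglob t) (by linarith)

lemma Front.hasDerivAt_W (hU : IsKPPFront σ U) (x : ℝ) :
    HasDerivAt (fun y => Real.exp (σ * y) * deriv U y)
      (-(Real.exp (σ * x) * (U x * (1 - U x)))) x := by
  have he : HasDerivAt (fun y => Real.exp (σ * y)) (Real.exp (σ * x) * σ) x := by
    have h1 : HasDerivAt (fun y : ℝ => σ * y) σ x := by
      simpa using (hasDerivAt_id x).const_mul σ
    exact (Real.hasDerivAt_exp (σ * x)).comp x h1
  have := he.mul ((Front.d2 hU x).hasDerivAt)
  refine this.congr_deriv ?_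
  rw [Front.ode hU]
  ring

lemma Front.W_anti (hU : IsKPPFront σ U) :
    Antitone (fun y => Real.exp (σ * y) * deriv U y) := by
  apply antitone_of_deriv_nonpos
  · exact fun x => (Front.hasDerivAt_W hU x).differentiableAt
  · intro x
    rw [(Front.hasDerivAt_W hU x).deriv]
    have h0 := hU.2.1 x
    have h1 := Front.le_one hU x
    have he := Real.exp_pos (σ * x)
    have hm : 0 ≤ U x * (1 - U x) := mul_nonneg h0 (by linarith)
    nlinarith

lemma Front.lt_one (hσ : 2 ≤ σ) (hU : IsKPPFront σ U) (x : ℝ) : U x < 1 := by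
  rcases lt_or_ge (U x) 1 with h | h
  · exact h
  have hx1 : U x = 1 := le_antisymm (Front.le_one hU x) h
  exfalso
  set x₀ := x
  -- x₀ is a global max, so deriv U x₀ = 0
  have hloc : IsLocalMax U x₀ :=
    Filter.Eventually.of_forall (fun y => by rw [hx1]; exact Front.le_one hU y)
  have hder : deriv U x₀ = 0 := hloc.deriv_eq_zero
  -- deriv U ≤ 0 on Ici x₀
  have hderiv_nonpos : ∀ y ∈ Set.Ici x₀, deriv U y ≤ 0 := by
    intro y hy
    have hW := Front.W_anti hU hy
    simp only [hder, mul_zero] at hW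
    have he := Real.exp_pos (σ * y)
    nlinarith
  -- Gronwall on g = (1 - U) - deriv U  on  Ici x₀
  set g : ℝ → ℝ := fun y => (1 - U y) - deriv U y with hg
  have hgd : ∀ y, HasDerivAt g (-deriv U y - deriv (deriv U) y) y := by
    intro y
    have h := ((hasDerivAt_const y (1:ℝ)).sub (Front.d1 hU y).hasDerivAt).sub
      (Front.d2 hU y).hasDerivAt
    refine h.congr_deriv ?_
    ring
  have hg0 : g x₀ = 0 := by simp [hg, hx1, hder]
  have hgnonneg : ∀ y ∈ Set.Ici x₀, 0 ≤ g y := by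
    intro y hy
    have := Front.le_one hU y
    have := hderiv_nonpos y hy
    simp only [hg]; linarith
  -- k = exp(-y) * g y is antitone on Ici x₀
  have hkd : ∀ y, HasDerivAt (fun s => Real.exp (-s) * g s)
      (Real.exp (-y) * (-(g y) + (-deriv U y - deriv (deriv U) y))) y := by
    intro y
    have he : HasDerivAt (fun s : ℝ => Real.exp (-s)) (-Real.exp (-y)) y := by
      have h1 : HasDerivAt (fun s : ℝ => -s) (-1 : ℝ) y := (hasDerivAt_id y).neg
      exact ((Real.hasDerivAt_exp (-y)).comp y h1).congr_deriv (by simp)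
    have := he.mul (hgd y)
    refine this.congr_deriv ?_
    ring
  have hkanti : AntitoneOn (fun s => Real.exp (-s) * g s) (Set.Ici x₀) := by
    apply antitoneOn_of_deriv_nonpos (convex_Ici _)
      (fun y _ => ((hkd y).differentiableAt).continuousAt.continuousWithinAt)
      (fun y _ => ((hkd y).differentiableAt).differentiableWithinAt)
    intro y hy
    rw [interior_Ici] at hy
    rw [(hkd y).deriv]
    have he := Real.exp_pos (-y)
    have h1 : -(g y) + (-deriv U y - deriv (deriv U) y) ≤ 0 := by
      rw [Front.ode hU]
      have hU1 := Front.le_one hU y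
      have hUp := hderiv_nonpos y (Set.mem_Ici.2 (le_of_lt hy))
      simp only [hg]
      nlinarith
    nlinarith
  -- conclude g = 0 on Ici x₀, hence U = 1 on Ici x₀
  have hU1 : ∀ y ∈ Set.Ici x₀, U y = 1 := by
    intro y hy
    have h1 : Real.exp (-y) * g y ≤ Real.exp (-x₀) * g x₀ :=
      hkanti Set.self_mem_Ici hy hy
    rw [hg0, mul_zero] at h1
    have h2 : 0 ≤ g y := hgnonneg y hy
    have he := Real.exp_pos (-y)
    have hgy : g y = 0 := by nlinarith
    have hUy := Front.le_one hU y
    have hdy := hderiv_nonpos y hy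
    simp only [hg] at hgy
    linarith
  -- contradiction with U → 0 at +∞
  have : Tendsto U atTop (𝓝 1) := by
    have : U =ᶠ[atTop] (fun _ => (1:ℝ)) := by
      filter_upwards [eventually_ge_atTop x₀] with y hy
      exact hU1 y hy
    exact Tendsto.congr' this.symm tendsto_const_nhds
  exact absurd (tendsto_nhds_unique hU.2.2.2.2 this) (by norm_num)

lemma Front.pos (hU : IsKPPFront σ U) (x : ℝ) : 0 < U x := by
  rcases lt_or_ge 0 (U x) with h | h
  · exact h
  have hx0 : U x = 0 := le_antisymm h (hU.2.1 x)
  exfalso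
  have hloc : IsLocalMin U x :=
    Filter.Eventually.of_forall (fun y => by rw [hx0]; exact hU.2.1 y)
  have hder : deriv U x = 0 := hloc.deriv_eq_zero
  -- deriv U ≥ 0 on Iic x
  have hnn : ∀ y ∈ Set.Iic x, 0 ≤ deriv U y := by
    intro y hy
    have hW := Front.W_anti hU (hy : y ≤ x)
    simp only [hder, mul_zero] at hW
    have he := Real.exp_pos (σ * y)
    nlinarith
  have hmono : MonotoneOn U (Set.Iic x) := by
    apply monotoneOn_of_deriv_nonneg (convex_Iic _)
      ((Front.d1 hU).continuous.continuousOn)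
      ((Front.d1 hU).differentiableOn)
    intro y hy
    rw [interior_Iic] at hy
    exact hnn y (Set.mem_Iic.mpr (le_of_lt hy))
  have h1 : (1:ℝ) ≤ U x := by
    apply le_of_tendsto hU.2.2.2.1
    filter_upwards [eventually_le_atBot x] with y hy
    exact hmono (Set.mem_Iic.2 hy) Set.self_mem_Iic hy
  rw [hx0] at h1
  norm_num at h1

lemma Front.deriv_neg (hσ : 2 ≤ σ) (hU : IsKPPFront σ U) (x : ℝ) : deriv U x < 0 := by
  by_contra h
  push_neg at h
  -- W strictly antitone
  have hWd := Front.hasDerivAt_W hU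
  have hWneg : ∀ y, deriv (fun s => Real.exp (σ * s) * deriv U s) y < 0 := by
    intro y
    rw [(hWd y).deriv]
    have h1 := Front.pos hU y
    have h2 := Front.lt_one hσ hU y
    have he := Real.exp_pos (σ * y)
    have hm : 0 < U y * (1 - U y) := mul_pos h1 (by linarith)
    nlinarith
  have hWanti : StrictAnti (fun s => Real.exp (σ * s) * deriv U s) :=
    strictAnti_of_deriv_neg hWneg
  -- deriv U > 0 on Iio x
  have hpos : ∀ y ∈ Set.Iio x, 0 < deriv U y := by
    intro y hy
    have := hWanti hy
    have he := Real.exp_pos (σ * y)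
    have hx0 : 0 ≤ Real.exp (σ * x) * deriv U x :=
      mul_nonneg (Real.exp_pos _).le h
    simp only at this ⊢
    nlinarith
  have hmono : MonotoneOn U (Set.Iic x) := by
    apply monotoneOn_of_deriv_nonneg (convex_Iic _)
      ((Front.d1 hU).continuous.continuousOn)
      ((Front.d1 hU).differentiableOn)
    intro y hy
    rw [interior_Iic] at hy
    exact (hpos y hy).le
  have h1 : (1:ℝ) ≤ U (x - 1) := by
    apply le_of_tendsto hU.2.2.2.1
    filter_upwards [eventually_le_atBot (x - 1)] with y hy
    exact hmono (Set.mem_Iic.2 (by linarith)) (Set.mem_Iic.2 (by linarith)) hy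
  exact absurd h1 (not_le.2 (Front.lt_one hσ hU (x - 1)))

lemma Front.strictAnti (hσ : 2 ≤ σ) (hU : IsKPPFront σ U) : StrictAnti U :=
  strictAnti_of_deriv_neg (Front.deriv_neg hσ hU)

lemma Front.slope_le (hσ : 2 ≤ σ) (hU : IsKPPFront σ U) (x : ℝ) :
    -deriv U x ≤ 1 - U x := by
  by_contra hcon
  push_neg at hcon
  have hz : ∀ y, 0 < 1 - U y := fun y => by linarith [Front.lt_one hσ hU y]
  have hv : ∀ y, 0 < -deriv U y := fun y => by linarith [Front.deriv_neg hσ hU y]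
  set c : ℝ := (-deriv U x) / (1 - U x) with hc
  have hc1 : 1 < c := (one_lt_div (hz x)).2 hcon
  -- ψ : difference function
  set ψ : ℝ → ℝ := fun t => -deriv U t - c * (1 - U t) with hψdef
  have hψd : ∀ t, HasDerivAt ψ (-deriv (deriv U) t + c * deriv U t) t := by
    intro t
    have h := ((Front.d2 hU t).hasDerivAt.neg).sub
      (((hasDerivAt_const t (1:ℝ)).sub (Front.d1 hU t).hasDerivAt).const_mul c)
    refine h.congr_deriv ?_
    ring
  have hψx : ψ x = 0 := by
    have h : c * (1 - U x) = -deriv U x := div_mul_cancel₀ _ (hz x).ne'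
    simp only [hψdef]
    linarith
  -- Claim 1 : c * (1 - U y) ≤ -deriv U y for all y ≤ x
  have claim1 : ∀ y, y ≤ x → 0 ≤ ψ y := by
    intro y hyx
    by_contra hy
    push_neg at hy
    have hyx' : y < x := by
      rcases eq_or_lt_of_le hyx with h | h
      · rw [h, hψx] at hy; norm_num at hy
      · exact h
    set S := Set.Icc y x ∩ ψ ⁻¹' {0} with hS
    have hScl : IsClosed S :=
      isClosed_Icc.inter (isClosed_eq
        (continuous_iff_continuousAt.2 (fun t => ((hψd t).differentiableAt).continuousAt))
        continuous_const)
    have hSne : S.Nonempty := ⟨x, ⟨⟨hyx, le_refl x⟩, by simpa using hψx⟩⟩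
    have hSbdd : BddBelow S := ⟨y, fun t ht => ht.1.1⟩
    set s := sInf S with hs
    have hsS : s ∈ S := hScl.csInf_mem hSne hSbdd
    have hψs : ψ s = 0 := hsS.2
    have hys : y < s := by
      rcases eq_or_lt_of_le hsS.1.1 with h | h
      · exfalso
        rw [h, hψs] at hy
        norm_num at hy
      · exact h
    -- ψ < 0 on [y, s)
    have hneg : ∀ t, y ≤ t → t < s → ψ t < 0 := by
      intro t hyt hts
      rcases lt_trichotomy (ψ t) 0 with h | h | h
      · exact h
      · exact absurd (csInf_le hSbdd ⟨⟨hyt, le_trans hts.le hsS.1.2⟩, by simpa using h⟩)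
          (not_le.2 hts)
      · -- IVT gives a zero in (y, t)
        have hsub : Set.Icc (ψ y) (ψ t) ⊆ ψ '' Set.Icc y t :=
          intermediate_value_Icc hyt
            (fun r _ => ((hψd r).differentiableAt).continuousAt.continuousWithinAt)
        obtain ⟨r, hrm, hr⟩ := hsub ⟨hy.le, h.le⟩
        have : s ≤ r := csInf_le hSbdd ⟨⟨hrm.1, le_trans (le_trans hrm.2 hts.le) hsS.1.2⟩,
          by simpa using hr⟩
        linarith [hrm.2]
    -- derivative of ψ at s is negative
    have hψds : -deriv (deriv U) s + c * deriv U s < 0 := by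
      rw [Front.ode hU]
      have hA1 : U s < 1 := Front.lt_one hσ hU s
      have hA0 : 0 < U s := Front.pos hU s
      have hBs : deriv U s = -(c * (1 - U s)) := by
        have := hψs
        simp only [hψdef] at this
        linarith
      rw [hBs]
      have hcpos : (0:ℝ) < c := lt_trans one_pos hc1
      have h4 : 2 * c ≤ σ * c := by nlinarith
      have h5 : 1 < c * c := by nlinarith
      have h6 : 0 < σ * c + c * c - U s := by nlinarith
      nlinarith [mul_pos (hz s) h6]
    -- but the slope from the left is nonnegative
    have hts : Tendsto (slope ψ s) (𝓝[<] s) (𝓝 (-deriv (deriv U) s + c * deriv U s)) :=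
      (hasDerivAt_iff_tendsto_slope.1 (hψd s)).mono_left
        (nhdsWithin_mono s (fun t ht => ne_of_lt ht))
    have h0 : 0 ≤ -deriv (deriv U) s + c * deriv U s := by
      apply ge_of_tendsto hts
      filter_upwards [Ioo_mem_nhdsLT_of_mem ⟨hys, le_refl s⟩] with t ht
      rw [slope_def_field, hψs, sub_zero]
      exact div_nonneg_of_nonpos (hneg t ht.1.le ht.2).le (by linarith [ht.2])
    linarith
  -- Claim 2 : contradiction via g = z / v
  set g : ℝ → ℝ := fun t => (1 - U t) / (-deriv U t) with hgdef
  have hgd : ∀ t, HasDerivAt g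
      (((-deriv U t) * (-deriv U t) - (1 - U t) * (-deriv (deriv U) t)) / (-deriv U t) ^ 2) t := by
    intro t
    have hz' : HasDerivAt (fun t => 1 - U t) (-deriv U t) t := by
      have := (hasDerivAt_const t (1:ℝ)).sub (Front.d1 hU t).hasDerivAt
      refine this.congr_deriv ?_; ring
    have hv' : HasDerivAt (fun t => -deriv U t) (-deriv (deriv U) t) t :=
      (Front.d2 hU t).hasDerivAt.neg
    exact hz'.div hv' (hv t).ne'
  have hgpos : ∀ t, 0 < g t := fun t => div_pos (hz t) (hv t)
  set κ : ℝ := 1 - 1 / (c * c) with hκ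
  have hcpos : (0:ℝ) < c := lt_trans one_pos hc1
  have hκpos : 0 < κ := by
    rw [hκ]
    have h1 : 1 / (c * c) < 1 := by
      rw [div_lt_one (by positivity)]
      nlinarith
    linarith
  have hκ1 : (1 - κ) * (c * c) = 1 := by
    rw [hκ]; field_simp; ring
  -- derivative of g is at least κ on Iic x
  have hlow : ∀ t, t ≤ x → κ ≤
      ((-deriv U t) * (-deriv U t) - (1 - U t) * (-deriv (deriv U) t)) / (-deriv U t) ^ 2 := by
    intro t htx
    rw [le_div_iff₀ (pow_pos (hv t) 2)]
    have h1κ : (0:ℝ) ≤ 1 - κ := by nlinarith [hκ1, mul_pos hcpos hcpos]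
    have h1 : c * (1 - U t) ≤ -deriv U t := by
      have := claim1 t htx
      simp only [hψdef] at this
      linarith
    have h2 : (c * (1 - U t)) * (c * (1 - U t)) ≤ (-deriv U t) * (-deriv U t) :=
      mul_le_mul h1 h1 (mul_nonneg hcpos.le (hz t).le) (hv t).le
    have h3 : (1 - U t) * (1 - U t) ≤ (1 - κ) * ((-deriv U t) * (-deriv U t)) := by
      have := mul_le_mul_of_nonneg_left h2 h1κ
      calc (1 - U t) * (1 - U t)
            = ((1 - κ) * (c * c)) * ((1 - U t) * (1 - U t)) := by rw [hκ1]; ring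
        _ = (1 - κ) * ((c * (1 - U t)) * (c * (1 - U t))) := by ring
        _ ≤ (1 - κ) * ((-deriv U t) * (-deriv U t)) := this
    rw [Front.ode hU]
    have hU1 := Front.lt_one hσ hU t
    have hU0 := Front.pos hU t
    have hσv : 0 ≤ σ * (1 - U t) * (-deriv U t) := by
      apply mul_nonneg (mul_nonneg (by linarith) (by linarith)) (hv t).le
    nlinarith [mul_nonneg (mul_nonneg (hU0.le) (by linarith : (0:ℝ) ≤ 1 - U t))
      (by linarith : (0:ℝ) ≤ 1 - U t), sq_nonneg (1 - U t)]
  -- the function g t - κ t is monotone on Iic x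
  have hmd : ∀ t, HasDerivAt (fun r => g r - κ * r)
      ((((-deriv U t) * (-deriv U t) - (1 - U t) * (-deriv (deriv U) t)) / (-deriv U t) ^ 2) - κ)
      t := by
    intro t
    have := (hgd t).sub ((hasDerivAt_id t).const_mul κ)
    refine this.congr_deriv ?_
    ring
  have hmono : MonotoneOn (fun r => g r - κ * r) (Set.Iic x) := by
    apply monotoneOn_of_deriv_nonneg (convex_Iic _)
      (fun t _ => ((hmd t).differentiableAt).continuousAt.continuousWithinAt)
      (fun t _ => ((hmd t).differentiableAt).differentiableWithinAt)
    intro t ht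
    rw [interior_Iic] at ht
    rw [(hmd t).deriv]
    linarith [hlow t ht.le]
  -- take y far to the left
  set y : ℝ := x - (g x + 1) / κ with hy
  have hyx : y ≤ x := by
    rw [hy]
    have : 0 < (g x + 1) / κ := div_pos (by linarith [hgpos x]) hκpos
    linarith
  have hm := hmono (Set.mem_Iic.2 hyx) Set.self_mem_Iic hyx
  simp only at hm
  have hcalc : κ * y = κ * x - (g x + 1) := by
    rw [hy]
    field_simp
  have : g y ≤ -1 := by nlinarith [hm, hcalc]
  linarith [hgpos y]

lemma Front.surj (hσ : 2 ≤ σ) (hU : IsKPPFront σ U) {u : ℝ} (h0 : 0 < u) (h1 : u < 1) :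
    ∃ t, U t = u := by
  obtain ⟨a, ha⟩ := (eventually_atBot.1 (hU.2.2.2.1 (Ioi_mem_nhds h1))) 
  obtain ⟨b, hb⟩ := (eventually_atTop.1 (hU.2.2.2.2 (Iio_mem_nhds h0)))
  have hUa : u < U a := ha a le_rfl
  have hUb : U b < u := hb b le_rfl
  have hab : a < b := by
    by_contra h
    push_neg at h
    rcases eq_or_lt_of_le h with h' | h'
    · rw [h'] at hUb; linarith
    · have := Front.strictAnti hσ hU h'
      linarith
  have hsub : Set.Icc (U b) (U a) ⊆ U '' Set.Icc a b :=
    intermediate_value_Icc' hab.le ((Front.d1 hU).continuous.continuousOn)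
  obtain ⟨t, _, ht⟩ := hsub ⟨hUb.le, hUa.le⟩
  exact ⟨t, ht⟩

lemma Front.translate (hU : IsKPPFront σ U) (a : ℝ) :
    IsKPPFront σ (fun y => U (y + a)) := by
  have hd1 : deriv (fun y => U (y + a)) = fun y => deriv U (y + a) := by
    funext y
    exact deriv_comp_add_const U a y
  refine ⟨?_, fun y => hU.2.1 (y + a), ?_, ?_, ?_⟩
  · exact hU.1.comp (contDiff_id.add contDiff_const)
  · intro y
    rw [hd1]
    have hd2 : deriv (fun y => deriv U (y + a)) y = deriv (deriv U) (y + a) :=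
      deriv_comp_add_const (deriv U) a y
    rw [hd2]
    exact hU.2.2.1 (y + a)
  · exact hU.2.2.2.1.comp (tendsto_atBot_add_const_right atBot a tendsto_id)
  · exact hU.2.2.2.2.comp (tendsto_atTop_add_const_right atTop a tendsto_id)

lemma Front.deriv_eq_at_zero (hσ : 2 ≤ σ) {U₁ U₂ : ℝ → ℝ}
    (h₁ : IsKPPFront σ U₁) (h₂ : IsKPPFront σ U₂) (h0 : U₁ 0 = U₂ 0) :
    deriv U₁ 0 = deriv U₂ 0 := by
  classical
  -- G : partial inverse of U₂
  set G : ℝ → ℝ := fun u => if h : 0 < u ∧ u < 1 then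
    Classical.choose (Front.surj hσ h₂ h.1 h.2) else 0 with hGdef
  have hG : ∀ u (hu0 : 0 < u) (hu1 : u < 1), U₂ (G u) = u := by
    intro u hu0 hu1
    simp only [hGdef, dif_pos (And.intro hu0 hu1)]
    exact Classical.choose_spec (Front.surj hσ h₂ hu0 hu1)
  have hanti₂ : StrictAnti U₂ := Front.strictAnti hσ h₂
  have hGcont : ∀ u, 0 < u → u < 1 → ContinuousAt G u := by
    intro u hu0 hu1
    rw [ContinuousAt]
    apply tendsto_order.2
    constructor
    · intro b hb
      have hub : u < U₂ b := by
        have := hanti₂ hb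
        rw [hG u hu0 hu1] at this
        exact this
      filter_upwards [Ioo_mem_nhds hu0 (lt_min hu1 hub)] with y hy
      by_contra hby
      push_neg at hby
      have : U₂ b ≤ U₂ (G y) := hanti₂.antitone hby
      rw [hG y hy.1 (lt_min_iff.1 hy.2).1] at this
      exact absurd (lt_min_iff.1 hy.2).2 (not_lt.2 this)
    · intro b hb
      have hub : U₂ b < u := by
        have := hanti₂ hb
        rw [hG u hu0 hu1] at this
        exact this
      filter_upwards [Ioo_mem_nhds (max_lt hu0 hub) hu1] with y hy
      by_contra hby
      push_neg at hby
      have : U₂ (G y) ≤ U₂ b := hanti₂.antitone hby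
      rw [hG y (lt_of_le_of_lt (le_max_left 0 (U₂ b)) hy.1) hy.2] at this
      exact absurd (lt_of_le_of_lt (le_max_right 0 (U₂ b)) hy.1) (not_lt.2 this)
  have hGd : ∀ u, 0 < u → u < 1 → HasDerivAt G (deriv U₂ (G u))⁻¹ u := by
    intro u hu0 hu1
    apply HasDerivAt.of_local_left_inverse (hGcont u hu0 hu1)
      ((Front.d1 h₂ (G u)).hasDerivAt) (Front.deriv_neg hσ h₂ (G u)).ne
    filter_upwards [Ioo_mem_nhds hu0 hu1] with y hy
    exact hG y hy.1 hy.2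
  -- θ synchronizes U₂ with U₁
  set θ : ℝ → ℝ := fun t => G (U₁ t) with hθdef
  have hθ : ∀ t, U₂ (θ t) = U₁ t :=
    fun t => hG (U₁ t) (Front.pos h₁ t) (Front.lt_one hσ h₁ t)
  have hθ0 : θ 0 = 0 := by
    apply hanti₂.injective
    rw [hθ 0, h0]
  have hθd : ∀ t, HasDerivAt θ ((deriv U₂ (θ t))⁻¹ * deriv U₁ t) t := by
    intro t
    exact (hGd (U₁ t) (Front.pos h₁ t) (Front.lt_one hσ h₁ t)).comp t
      (Front.d1 h₁ t).hasDerivAt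
  -- Q : difference of slopes at synchronized points
  set Q : ℝ → ℝ := fun t => deriv U₂ (θ t) - deriv U₁ t with hQdef
  have hQd : ∀ t, HasDerivAt Q
      (deriv (deriv U₂) (θ t) * ((deriv U₂ (θ t))⁻¹ * deriv U₁ t) - deriv (deriv U₁) t) t := by
    intro t
    exact (((Front.d2 h₂ (θ t)).hasDerivAt).comp t (hθd t)).sub (Front.d2 h₁ t).hasDerivAt
  have hkey : ∀ t, deriv (deriv U₂) (θ t) * ((deriv U₂ (θ t))⁻¹ * deriv U₁ t)
      - deriv (deriv U₁) t
      = (U₁ t * (1 - U₁ t) / deriv U₂ (θ t)) * Q t := by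
    intro t
    have hw : deriv U₂ (θ t) ≠ 0 := (Front.deriv_neg hσ h₂ (θ t)).ne
    rw [Front.ode h₂, Front.ode h₁, hθ t]
    simp only [hQdef]
    field_simp
    ring
  -- h = Q² is antitone
  have hhd : ∀ t, HasDerivAt (fun r => Q r ^ 2)
      (2 * Q t * ((U₁ t * (1 - U₁ t) / deriv U₂ (θ t)) * Q t)) t := by
    intro t
    have := ((hQd t).pow 2)
    rw [hkey t] at this
    refine this.congr_deriv ?_
    ring
  have hderiv_nonpos : ∀ t, deriv (fun r => Q r ^ 2) t ≤ 0 := by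
    intro t
    rw [(hhd t).deriv]
    have hw := Front.deriv_neg hσ h₂ (θ t)
    have hu0 := Front.pos h₁ t
    have hu1 := Front.lt_one hσ h₁ t
    have hnum : 0 ≤ U₁ t * (1 - U₁ t) := mul_nonneg hu0.le (by linarith)
    have hdd : U₁ t * (1 - U₁ t) / deriv U₂ (θ t) ≤ 0 :=
      div_nonpos_of_nonneg_of_nonpos hnum hw.le
    nlinarith [mul_nonneg (neg_nonneg.2 hdd) (sq_nonneg (Q t))]
  have hhanti : Antitone (fun r => Q r ^ 2) :=
    antitone_of_deriv_nonpos (fun t => (hhd t).differentiableAt) hderiv_nonpos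
  -- Q is bounded : Q t ^ 2 ≤ 1
  have hQbdd : ∀ t, Q t ^ 2 ≤ 1 := by
    intro t
    have h1 : -deriv U₂ (θ t) ≤ 1 - U₂ (θ t) := Front.slope_le hσ h₂ (θ t)
    have h2 : -deriv U₁ t ≤ 1 - U₁ t := Front.slope_le hσ h₁ t
    have h3 := Front.deriv_neg hσ h₂ (θ t)
    have h4 := Front.deriv_neg hσ h₁ t
    have h5 := Front.pos h₂ (θ t)
    have h6 := Front.pos h₁ t
    simp only [hQdef]
    nlinarith
  -- if Q 0 ≠ 0 we get a contradiction
  have hQ0 : Q 0 = 0 := by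
    by_contra hQ0
    set ε : ℝ := Q 0 ^ 2 with hε
    have hεpos : 0 < ε := by positivity
    obtain ⟨x₀, hx₀⟩ := eventually_atBot.1 (h₁.2.2.2.1 (Ioi_mem_nhds (by norm_num : (1:ℝ)/2 < 1)))
    set x₁ : ℝ := min x₀ 0 with hx₁
    have hhalf : ∀ t, t ≤ x₁ → 1/2 < U₁ t :=
      fun t ht => hx₀ t (le_trans ht (min_le_left _ _))
    -- derivative bound on Iic x₁
    have hd : ∀ t, t ≤ x₁ → deriv (fun r => Q r ^ 2) t ≤ -ε := by
      intro t ht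
      rw [(hhd t).deriv]
      have hw := Front.deriv_neg hσ h₂ (θ t)
      have hs : -deriv U₂ (θ t) ≤ 1 - U₂ (θ t) := Front.slope_le hσ h₂ (θ t)
      rw [hθ t] at hs
      have hu1 := Front.lt_one hσ h₁ t
      have hu0 : 1/2 < U₁ t := hhalf t ht
      -- a := u(1-u)/(-w) ≥ u ≥ 1/2
      have ha : U₁ t ≤ U₁ t * (1 - U₁ t) / (-deriv U₂ (θ t)) := by
        rw [le_div_iff₀ (by linarith : (0:ℝ) < -deriv U₂ (θ t))]
        nlinarith
      have hQ2 : ε ≤ Q t ^ 2 := by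
        have : Q t ^ 2 ≥ Q 0 ^ 2 := hhanti (le_trans ht (min_le_right _ _))
        linarith
      have hrw : U₁ t * (1 - U₁ t) / deriv U₂ (θ t)
          = -(U₁ t * (1 - U₁ t) / (-deriv U₂ (θ t))) := by
        field_simp
      rw [hrw]
      have hA : 0 ≤ U₁ t * (1 - U₁ t) / -deriv U₂ (θ t) :=
        div_nonneg (mul_nonneg (by linarith) (by linarith)) (by linarith)
      have h8 : (1/2) * ε ≤ (U₁ t * (1 - U₁ t) / -deriv U₂ (θ t)) * Q t ^ 2 :=
        mul_le_mul (by linarith) hQ2 hεpos.le hA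
      nlinarith [h8]
    -- monotone trick
    have hmono : AntitoneOn (fun r => Q r ^ 2 + ε * r) (Set.Iic x₁) := by
      apply antitoneOn_of_deriv_nonpos (convex_Iic _)
      · exact fun t _ => (((hhd t).differentiableAt).add
          ((hasDerivAt_id t).const_mul ε).differentiableAt).continuousAt.continuousWithinAt
      · exact fun t _ => (((hhd t).differentiableAt).add
          ((hasDerivAt_id t).const_mul ε).differentiableAt).differentiableWithinAt
      · intro t htm
        rw [interior_Iic] at htm
        have hca : HasDerivAt (fun r => Q r ^ 2 + ε * r)
            (deriv (fun r => Q r ^ 2) t + ε) t := by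
          have := ((hhd t).add ((hasDerivAt_id t).const_mul ε))
          rw [← (hhd t).deriv] at this
          refine this.congr_deriv ?_
          ring
        rw [hca.deriv]
        linarith [hd t htm.le]
    set y : ℝ := x₁ - 2 / ε with hy
    have hyx : y ≤ x₁ := by
      rw [hy]
      have : 0 < 2 / ε := by positivity
      linarith
    have hm := hmono (Set.mem_Iic.2 hyx) Set.self_mem_Iic hyx
    simp only at hm
    have hcalc : ε * y = ε * x₁ - 2 := by
      rw [hy]
      field_simp
    have hbd := hQbdd y
    have hq1 : 0 ≤ Q x₁ ^ 2 := sq_nonneg _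
    nlinarith [hm, hcalc]
  -- conclude
  have : deriv U₂ (θ 0) - deriv U₁ 0 = 0 := hQ0
  rw [hθ0] at this
  linarith

lemma Front.eq_of_init (hσ : 2 ≤ σ) {U₁ U₂ : ℝ → ℝ}
    (h₁ : IsKPPFront σ U₁) (h₂ : IsKPPFront σ U₂)
    (e0 : U₁ 0 = U₂ 0) (e1 : deriv U₁ 0 = deriv U₂ 0) : U₁ = U₂ := by
  set N : ℝ → ℝ := fun t => (U₁ t - U₂ t) ^ 2 + (deriv U₁ t - deriv U₂ t) ^ 2 with hNdef
  set K : ℝ := 2 + 2 * σ with hK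
  have hNd : ∀ t, HasDerivAt N
      (2 * (U₁ t - U₂ t) * (deriv U₁ t - deriv U₂ t)
        + 2 * (deriv U₁ t - deriv U₂ t) * (deriv (deriv U₁) t - deriv (deriv U₂) t)) t := by
    intro t
    have hA : HasDerivAt (fun r => (U₁ r - U₂ r) ^ 2)
        (2 * (U₁ t - U₂ t) * (deriv U₁ t - deriv U₂ t)) t := by
      have := (((Front.d1 h₁ t).hasDerivAt).sub ((Front.d1 h₂ t).hasDerivAt)).pow 2
      refine this.congr_deriv ?_
      simp only [Pi.sub_apply]; ring
    have hB : HasDerivAt (fun r => (deriv U₁ r - deriv U₂ r) ^ 2)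
        (2 * (deriv U₁ t - deriv U₂ t) * (deriv (deriv U₁) t - deriv (deriv U₂) t)) t := by
      have := (((Front.d2 h₁ t).hasDerivAt).sub ((Front.d2 h₂ t).hasDerivAt)).pow 2
      refine this.congr_deriv ?_
      simp only [Pi.sub_apply]; ring
    exact hA.add hB
  have hNnonneg : ∀ t, 0 ≤ N t := fun t => by positivity
  have hN0 : N 0 = 0 := by
    simp only [hNdef]
    rw [e0, e1]
    ring
  have hbound : ∀ t,
      |2 * (U₁ t - U₂ t) * (deriv U₁ t - deriv U₂ t)
        + 2 * (deriv U₁ t - deriv U₂ t) * (deriv (deriv U₁) t - deriv (deriv U₂) t)|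
      ≤ K * N t := by
    intro t
    rw [Front.ode h₁, Front.ode h₂]
    have hu1 := (Front.pos h₁ t)
    have hu1' := (Front.lt_one hσ h₁ t)
    have hu2 := (Front.pos h₂ t)
    have hu2' := (Front.lt_one hσ h₂ t)
    rw [abs_le]
    constructor
    · simp only [hNdef, hK]
      nlinarith [sq_nonneg (U₁ t - U₂ t + (deriv U₁ t - deriv U₂ t)),
        sq_nonneg (U₁ t - U₂ t - (deriv U₁ t - deriv U₂ t)),
        sq_nonneg (U₁ t - U₂ t), sq_nonneg (deriv U₁ t - deriv U₂ t)]
    · simp only [hNdef, hK]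
      nlinarith [sq_nonneg (U₁ t - U₂ t + (deriv U₁ t - deriv U₂ t)),
        sq_nonneg (U₁ t - U₂ t - (deriv U₁ t - deriv U₂ t)),
        sq_nonneg (U₁ t - U₂ t), sq_nonneg (deriv U₁ t - deriv U₂ t)]
  have hNzero : ∀ t, N t = 0 := by
    intro t
    rcases le_total 0 t with ht | ht
    · -- forward
      have hfd : ∀ r, HasDerivAt (fun s => Real.exp (-(K * s)) * N s)
          (Real.exp (-(K * r)) * (-(K * N r) +
            (2 * (U₁ r - U₂ r) * (deriv U₁ r - deriv U₂ r)
            + 2 * (deriv U₁ r - deriv U₂ r) * (deriv (deriv U₁) r - deriv (deriv U₂) r)))) r := by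
        intro r
        have h1 : HasDerivAt (fun s : ℝ => -(K * s)) (-K) r := by
          exact ((hasDerivAt_id r).const_mul K).neg.congr_deriv (by simp)
        have he : HasDerivAt (fun s : ℝ => Real.exp (-(K * s)))
            (Real.exp (-(K * r)) * -K) r := h1.exp
        have := he.mul (hNd r)
        refine this.congr_deriv ?_
        ring
      have hanti : Antitone (fun s => Real.exp (-(K * s)) * N s) := by
        apply antitone_of_deriv_nonpos (fun r => (hfd r).differentiableAt)
        intro r
        rw [(hfd r).deriv]
        have hb := (abs_le.1 (hbound r)).2
        have he := Real.exp_pos (-(K * r))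
        nlinarith
      have h1 : Real.exp (-(K * t)) * N t ≤ Real.exp (-(K * 0)) * N 0 := hanti ht
      rw [hN0, mul_zero] at h1
      have he := Real.exp_pos (-(K * t))
      nlinarith [hNnonneg t]
    · -- backward
      have hfd : ∀ r, HasDerivAt (fun s => Real.exp (K * s) * N s)
          (Real.exp (K * r) * ((K * N r) +
            (2 * (U₁ r - U₂ r) * (deriv U₁ r - deriv U₂ r)
            + 2 * (deriv U₁ r - deriv U₂ r) * (deriv (deriv U₁) r - deriv (deriv U₂) r)))) r := by
        intro r
        have h1 : HasDerivAt (fun s : ℝ => K * s) K r := by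
          simpa using (hasDerivAt_id r).const_mul K
        have he : HasDerivAt (fun s : ℝ => Real.exp (K * s))
            (Real.exp (K * r) * K) r := h1.exp
        have := he.mul (hNd r)
        refine this.congr_deriv ?_
        ring
      have hmono : Monotone (fun s => Real.exp (K * s) * N s) := by
        apply monotone_of_deriv_nonneg (fun r => (hfd r).differentiableAt)
        intro r
        rw [(hfd r).deriv]
        have hb := (abs_le.1 (hbound r)).1
        have he := Real.exp_pos (K * r)
        nlinarith
      have h1 : Real.exp (K * t) * N t ≤ Real.exp (K * 0) * N 0 := hmono ht
      rw [hN0, mul_zero] at h1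
      have he := Real.exp_pos (K * t)
      nlinarith [hNnonneg t]
  funext t
  have := hNzero t
  simp only [hNdef] at this
  nlinarith [sq_nonneg (U₁ t - U₂ t), sq_nonneg (deriv U₁ t - deriv U₂ t),
    sq_abs (U₁ t - U₂ t), abs_nonneg (U₁ t - U₂ t), sq_nonneg (U₁ t + U₂ t)]

lemma Front.exists_translate (hσ : 2 ≤ σ) {U₁ U₂ : ℝ → ℝ}
    (h₁ : IsKPPFront σ U₁) (h₂ : IsKPPFront σ U₂) :
    ∃ h : ℝ, ∀ x : ℝ, U₂ x = U₁ (x + h) := by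
  obtain ⟨a, ha⟩ := Front.surj hσ h₁ (Front.pos h₂ 0) (Front.lt_one hσ h₂ 0)
  have hV : IsKPPFront σ (fun x => U₁ (x + a)) := Front.translate h₁ a
  have hV0 : (fun x => U₁ (x + a)) 0 = U₂ 0 := by simpa using ha
  have hVd : deriv (fun x => U₁ (x + a)) 0 = deriv U₂ 0 :=
    Front.deriv_eq_at_zero hσ hV h₂ hV0
  have := Front.eq_of_init hσ hV h₂ hV0 hVd
  exact ⟨a, fun x => (congrFun this x).symm⟩

/-- F/KPP fronts of a given speed `σ ≥ 2` are strictly decreasing and unique up to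
translation; in particular there is a unique front normalized by `U 0 = 1/2`. -/
theorem fkpp_front_unique_up_to_translation (σ : ℝ) (hσ : 2 ≤ σ)
    (U₁ U₂ : ℝ → ℝ) (h₁ : IsKPPFront σ U₁) (h₂ : IsKPPFront σ U₂) :
    StrictAnti U₁ ∧ StrictAnti U₂ ∧
    (∃ h : ℝ, ∀ x : ℝ, U₂ x = U₁ (x + h)) ∧
    (∃! U : ℝ → ℝ, IsKPPFront σ U ∧ U 0 = 1/2) := by
  refine ⟨Front.strictAnti hσ h₁, Front.strictAnti hσ h₂,
    Front.exists_translate hσ h₁ h₂, ?_⟩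
  obtain ⟨x₀, hx₀⟩ := Front.surj hσ h₁ (by norm_num : (0:ℝ) < 1/2) (by norm_num : (1:ℝ)/2 < 1)
  refine ⟨fun x => U₁ (x + x₀), ⟨Front.translate h₁ x₀, by simpa using hx₀⟩, ?_⟩
  rintro V ⟨hVf, hV0⟩
  set W : ℝ → ℝ := fun x => U₁ (x + x₀) with hW
  have hWf : IsKPPFront σ W := Front.translate h₁ x₀
  obtain ⟨h, hh⟩ := Front.exists_translate hσ hWf hVf
  have hWh : W h = 1/2 := by
    have := hh 0
    rw [hV0] at this
    simpa using this.symm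
  have hW0 : W 0 = 1/2 := by simpa [hW] using hx₀
  have hh0 : h = 0 := by
    by_contra hne
    have := (Front.strictAnti hσ hWf).injective (hWh.trans hW0.symm)
    exact hne this
  funext x
  rw [hh x, hh0, add_zero]
end

section
/- Let a > 0, set λ = √(a/2) and σ = λ + 1/λ = √(a/2) + √(2/a). Then the function U(x) = 1/(1 + e^{λ x}) is twice continuously differentiable, strictly decreasing, takes values in (0,1), satisfies U(x) → 1 as x → -∞ and U(x) → 0 as x → +∞, and solves U''(x) + σ U'(x) + U(x)(1 - U(x))(1 + a U(x)) = 0 for all x ∈ ℝ. In particular, for a > 2 the minimal-speed front of the cubic equation can be computed explicitly. -/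
open Filter Topology

/-- Explicit front for the cubic equation: with `lam = √(a/2)` and
`σ = lam + 1/lam = √(a/2) + √(2/a)`, the function `U x = 1 / (1 + exp (lam * x))`
is a `C²`, strictly decreasing front taking values in `(0,1)`, tending to `1`
at `-∞` and `0` at `+∞`, and solving `U'' + σ U' + U (1-U) (1+a U) = 0`. -/
theorem cubic_explicit_front (a lam σ : ℝ) (ha : 0 < a)
    (hlam : lam = Real.sqrt (a / 2))
    (hσ : σ = lam + 1 / lam)
    (U : ℝ → ℝ) (hU : U = fun x => 1 / (1 + Real.exp (lam * x))) :
    ContDiff ℝ 2 U ∧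
    StrictAnti U ∧
    (∀ x : ℝ, U x ∈ Set.Ioo (0 : ℝ) 1) ∧
    Tendsto U atBot (𝓝 1) ∧
    Tendsto U atTop (𝓝 0) ∧
    (∀ x : ℝ, deriv (deriv U) x + σ * deriv U x
      + U x * (1 - U x) * (1 + a * U x) = 0) := by
  have hlampos : 0 < lam := by
    rw [hlam]; exact Real.sqrt_pos.mpr (by linarith)
  have hlamsq : lam ^ 2 = a / 2 := by
    rw [hlam, sq]; exact Real.mul_self_sqrt (by linarith)
  have hpos : ∀ x : ℝ, 0 < 1 + Real.exp (lam * x) := fun x => by positivity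
  have hne : ∀ x : ℝ, (1 : ℝ) + Real.exp (lam * x) ≠ 0 := fun x => (hpos x).ne'
  -- derivative of the denominator
  have hf : ∀ x : ℝ, HasDerivAt (fun x => 1 + Real.exp (lam * x))
      (lam * Real.exp (lam * x)) x := by
    intro x
    have h1 : HasDerivAt (fun x : ℝ => lam * x) lam x := by
      simpa using (hasDerivAt_id x).const_mul lam
    have h2 := (Real.hasDerivAt_exp (lam * x)).comp x h1
    have := h2.const_add (1 : ℝ)
    simpa [mul_comm] using this
  -- first derivative of U
  have hU' : ∀ x : ℝ, HasDerivAt U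
      (-(lam * Real.exp (lam * x)) / (1 + Real.exp (lam * x)) ^ 2) x := by
    intro x
    have := (hf x).inv (hne x)
    have hUeq : U = fun x => ((1 : ℝ) + Real.exp (lam * x))⁻¹ := by
      rw [hU]; funext x; rw [one_div]
    rw [hUeq]
    simpa [neg_div, Pi.inv_def] using this
  have hderivU : deriv U = fun x =>
      -(lam * Real.exp (lam * x)) / (1 + Real.exp (lam * x)) ^ 2 := by
    funext x; exact (hU' x).deriv
  -- second derivative
  have hU'' : ∀ x : ℝ, HasDerivAt (deriv U)
      (lam ^ 2 * Real.exp (lam * x) * (Real.exp (lam * x) - 1)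
        / (1 + Real.exp (lam * x)) ^ 3) x := by
    intro x
    rw [hderivU]
    have hg : HasDerivAt (fun x => -(lam * Real.exp (lam * x)))
        (-(lam * (lam * Real.exp (lam * x)))) x := by
      have h1 : HasDerivAt (fun x : ℝ => lam * x) lam x := by
        simpa using (hasDerivAt_id x).const_mul lam
      have h2 := (Real.hasDerivAt_exp (lam * x)).comp x h1
      have := (h2.const_mul lam).neg
      simpa [mul_comm, mul_assoc, mul_left_comm, Pi.neg_def] using this
    have hh : HasDerivAt (fun x => (1 + Real.exp (lam * x)) ^ 2)
        (2 * (1 + Real.exp (lam * x)) * (lam * Real.exp (lam * x))) x := by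
      have := (hf x).pow 2
      simpa [mul_comm, mul_assoc, mul_left_comm, Pi.pow_def] using this
    have := hg.div hh (by positivity)
    refine this.congr_deriv ?_
    have h1 := hne x
    field_simp
    ring
  constructor
  · -- C²
    rw [hU]
    exact contDiff_const.div
      (contDiff_const.add (Real.contDiff_exp.comp (contDiff_const.mul contDiff_id)))
      hne
  constructor
  · -- strictly decreasing
    intro x y hxy
    rw [hU]
    simp only
    have : Real.exp (lam * x) < Real.exp (lam * y) :=
      Real.exp_lt_exp.mpr (by nlinarith)
    exact one_div_lt_one_div_of_lt (hpos x) (by linarith)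
  constructor
  · -- values in (0,1)
    intro x
    rw [hU]
    constructor
    · positivity
    · rw [div_lt_one (hpos x)]
      have := Real.exp_pos (lam * x); linarith
  constructor
  · -- limit at -∞
    rw [hU]
    have h1 : Tendsto (fun x : ℝ => lam * x) atBot atBot :=
      (tendsto_const_mul_atBot_of_pos hlampos).mpr tendsto_id
    have h2 : Tendsto (fun x : ℝ => Real.exp (lam * x)) atBot (𝓝 0) :=
      Real.tendsto_exp_atBot.comp h1
    have h3 : Tendsto (fun x : ℝ => 1 + Real.exp (lam * x)) atBot (𝓝 (1 + 0)) :=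
      tendsto_const_nhds.add h2
    have := (tendsto_const_nhds (x := (1:ℝ))).div h3 (by norm_num)
    simpa [Pi.div_def, one_div] using this
  constructor
  · -- limit at +∞
    rw [hU]
    have h1 : Tendsto (fun x : ℝ => lam * x) atTop atTop :=
      (tendsto_const_mul_atTop_of_pos hlampos).mpr tendsto_id
    have h2 : Tendsto (fun x : ℝ => Real.exp (lam * x)) atTop atTop :=
      Real.tendsto_exp_atTop.comp h1
    have h3 : Tendsto (fun x : ℝ => 1 + Real.exp (lam * x)) atTop atTop :=
      tendsto_atTop_add_const_left _ 1 h2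
    exact Tendsto.div_atTop tendsto_const_nhds h3
  · -- ODE
    intro x
    have h2 := (hU'' x).deriv
    have h1 : deriv U x = -(lam * Real.exp (lam * x)) / (1 + Real.exp (lam * x)) ^ 2 := by
      rw [hderivU]
    rw [h2, h1, hU, hσ]
    simp only
    have hnex := hne x
    have hlne : lam ≠ 0 := hlampos.ne'
    have haval : a = 2 * lam ^ 2 := by rw [hlamsq]; ring
    rw [haval]
    field_simp
    ring
end
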